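/- The right-hand side vector b with b_i = (|ω_i|/Δt) ⟨∇·v⟩*_i satisfies Σ_i b_i = 0 (orthogonal to the kernel of B), whenever the domain boundary terms vanish, because Σ_i |ω_i| v_i · ⟨∇1⟩_i = 0. -/

import Mathlib

lemma swap_sum' {N : ℕ} (f : Fin N → Fin N → ℝ) :
    ∑ i, ∑ j ∈ Finset.univ.erase i, f i j = ∑ i, ∑ j ∈ Finset.univ.erase i, f j i :=
  Finset.sum_comm' (by simp [Finset.mem_erase, and_comm, eq_comm])

/-- The right-hand side vector `b` with `bᵢ = (|ωᵢ|/Δt) ⟨∇·v⟩*ᵢ` satisfies `Σᵢ bᵢ = 0`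
(i.e. it is orthogonal to the kernel of `B`, spanned by constants), whenever the boundary
terms `vᵢ · Sᵢ` vanish, where `Sᵢ = Σⱼ (|Γ_ij|/r_ij)(xᵢ - xⱼ)` and
`⟨∇·v⟩*ᵢ = (1/|ωᵢ|) Σⱼ (|Γ_ij|/r_ij)(vᵢ - vⱼ)·(m_ij - xⱼ)`. -/
theorem rhs_vector_sums_to_zero {d N : ℕ}
    (xs : Fin N → EuclideanSpace ℝ (Fin d)) (hxs : Function.Injective xs)
    (vol : Fin N → ℝ) (hvol : ∀ i, 0 < vol i)
    (Δt : ℝ) (hΔt : 0 < Δt)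
    (Γ : Fin N → Fin N → ℝ) (hΓnn : ∀ i j, 0 ≤ Γ i j)
    (hΓsymm : ∀ i j, Γ i j = Γ j i)
    (m : Fin N → Fin N → EuclideanSpace ℝ (Fin d))
    (hmsymm : ∀ i j, m i j = m j i)
    (v : Fin N → EuclideanSpace ℝ (Fin d))
    (hnopen : ∀ i, (inner ℝ (v i)
      (∑ j ∈ Finset.univ.erase i, (Γ i j / dist (xs i) (xs j)) • (xs i - xs j)) : ℝ) = 0)
    (b : Fin N → ℝ)
    (hb : ∀ i, b i = (vol i / Δt) * ((vol i)⁻¹ * ∑ j ∈ Finset.univ.erase i,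
      (Γ i j / dist (xs i) (xs j)) * (inner ℝ (v i - v j) (m i j - xs j) : ℝ))) :
    ∑ i, b i = 0 := by
  classical
  set c : Fin N → Fin N → ℝ := fun i j => Γ i j / dist (xs i) (xs j) with hcdef
  have hcs : ∀ i j, c i j = c j i := by
    intro i j; simp only [hcdef, hΓsymm i j, dist_comm]
  -- boundary terms vanish, expanded
  have h0 : ∀ i, ∑ j ∈ Finset.univ.erase i, c i j * (inner ℝ (v i) (xs i - xs j) : ℝ) = 0 := by
    intro i
    have h := hnopen i
    rw [inner_sum] at h
    simp only [real_inner_smul_right] at h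
    exact h
  set f : Fin N → Fin N → ℝ := fun i j => c i j * (inner ℝ (v i - v j) (m i j - xs j) : ℝ) with hfdef
  have hS : ∑ i, ∑ j ∈ Finset.univ.erase i, f i j = 0 := by
    have h2 : (2:ℝ) * ∑ i, ∑ j ∈ Finset.univ.erase i, f i j
        = ∑ i, ∑ j ∈ Finset.univ.erase i, (f i j + f j i) := by
      simp only [Finset.sum_add_distrib]
      rw [← swap_sum' f]; ring
    -- f i j + f j i = c i j * ⟨v i - v j, xs i - xs j⟩
    have h3 : ∀ i, ∀ j ∈ Finset.univ.erase i,
        f i j + f j i = c i j * (inner ℝ (v i - v j) (xs i - xs j) : ℝ) := by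
      intro i j _
      have : (inner ℝ (v j - v i) (m j i - xs i) : ℝ)
          = - (inner ℝ (v i - v j) (m i j - xs i) : ℝ) := by
        rw [hmsymm j i, ← inner_neg_left]; congr 1; abel
      simp only [hfdef, this, hcs j i]
      rw [← mul_add, ← sub_eq_add_neg, ← inner_sub_right]
      congr 2
      abel
    rw [Finset.sum_congr rfl (fun i _ => Finset.sum_congr rfl (h3 i))] at h2
    -- expand ⟨v i - v j, ...⟩ = ⟨v i,...⟩ - ⟨v j,...⟩
    have h4 : ∑ i, ∑ j ∈ Finset.univ.erase i,
        c i j * (inner ℝ (v i - v j) (xs i - xs j) : ℝ) = 0 := by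
      have e : ∀ i j, c i j * (inner ℝ (v i - v j) (xs i - xs j) : ℝ)
          = c i j * (inner ℝ (v i) (xs i - xs j) : ℝ)
            - c i j * (inner ℝ (v j) (xs i - xs j) : ℝ) := by
        intro i j; rw [inner_sub_left]; ring
      simp only [e, Finset.sum_sub_distrib]
      have e2 : ∑ i, ∑ j ∈ Finset.univ.erase i, c i j * (inner ℝ (v j) (xs i - xs j) : ℝ)
          = ∑ i, ∑ j ∈ Finset.univ.erase i, c j i * (inner ℝ (v i) (xs j - xs i) : ℝ) :=
        swap_sum' _
      rw [e2]
      have e3 : ∀ i j, c j i * (inner ℝ (v i) (xs j - xs i) : ℝ)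
          = - (c i j * (inner ℝ (v i) (xs i - xs j) : ℝ)) := by
        intro i j
        have hi : (inner ℝ (v i) (xs j - xs i) : ℝ) = -(inner ℝ (v i) (xs i - xs j) : ℝ) := by
          rw [← inner_neg_right]; congr 1; abel
        rw [hcs j i, hi]; ring
      simp only [e3, Finset.sum_neg_distrib, sub_neg_eq_add, h0,
        Finset.sum_const_zero, add_zero]
    rw [h4] at h2
    linarith
  have hbi : ∀ i, b i = Δt⁻¹ * ∑ j ∈ Finset.univ.erase i, f i j := by
    intro i
    rw [hb i]
    have hv := (hvol i).ne'
    field_simp [hfdef, hcdef]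
    exact Finset.sum_congr rfl (fun j _ => by simp only [hfdef, hcdef]; ring)
  simp only [hbi, ← Finset.mul_sum, hS, mul_zero]
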